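/- Under the same hypotheses (f proper lsc convex, g differentiable with L-Lipschitz gradient, F = f + g bounded below, 0 < τ < 1/L), every cluster point x* of the proximal gradient sequence x_{k+1} = T_τ(x_k), where T_τ = Prox_{τf} ∘ (Id − τ∇g), is a stationary point of F, i.e. −∇g(x*) ∈ ∂f(x*). -/
import Mathlib


open Filter Topology

local notation "⟪" x ", " y "⟫" => @inner ℝ _ _ x y

section auxx

variable {n : ℕ}

/-- Prox optimality inequality: the prox point satisfies a variational inequality. -/
private lemma prox_key {f : EuclideanSpace ℝ (Fin n) → ℝ} {τ : ℝ}
    (hf_conv : ConvexOn ℝ Set.univ f) (hτ : 0 < τ)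
    {P : EuclideanSpace ℝ (Fin n) → EuclideanSpace ℝ (Fin n)}
    (hP : ∀ x z, (1 / 2) * ‖x - P x‖ ^ 2 + τ * f (P x) ≤ (1 / 2) * ‖x - z‖ ^ 2 + τ * f z)
    (x y : EuclideanSpace ℝ (Fin n)) :
    τ * f (P x) + ⟪x - P x, y - P x⟫ ≤ τ * f y := by
  set p := P x with hp
  set d : EuclideanSpace ℝ (Fin n) := y - p with hd
  set a : EuclideanSpace ℝ (Fin n) := x - p with ha
  have key : ∀ t : ℝ, 0 < t → t ≤ 1 →
      ⟪a, d⟫ ≤ τ * (f y - f p) + t * (‖d‖ ^ 2 / 2) := by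
    intro t ht0 ht1
    have h1 := hP x (p + t • d)
    have hpt : (1 - t) • p + t • y = p + t • d := by
      rw [hd]; module
    have hconv : f (p + t • d) ≤ (1 - t) * f p + t * f y := by
      rw [← hpt]
      exact hf_conv.2 (Set.mem_univ p) (Set.mem_univ y) (by linarith) ht0.le (by ring)
    have hxs : x - (p + t • d) = a - t • d := by rw [ha]; abel
    have hnorm : ‖a - t • d‖ ^ 2 = ‖a‖ ^ 2 - 2 * (t * ⟪a, d⟫) + t ^ 2 * ‖d‖ ^ 2 := by
      rw [norm_sub_sq_real, real_inner_smul_right, norm_smul]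
      simp [mul_pow, sq_abs]
    rw [hxs, hnorm] at h1
    have h2 : τ * f p ≤ - (t * ⟪a, d⟫) + t ^ 2 * ‖d‖ ^ 2 / 2
        + τ * ((1 - t) * f p + t * f y) := by nlinarith [hτ]
    have h3 : t * ⟪a, d⟫ ≤ t * (τ * (f y - f p) + t * (‖d‖ ^ 2 / 2)) := by nlinarith
    exact le_of_mul_le_mul_left h3 ht0
  have hfin : ⟪a, d⟫ ≤ τ * (f y - f p) := by
    refine le_of_forall_pos_le_add fun ε hε => ?_
    have hden : (0:ℝ) < ‖d‖ ^ 2 / 2 + 1 := by positivity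
    set t : ℝ := min 1 (ε / (‖d‖ ^ 2 / 2 + 1)) with htdef
    have ht0 : 0 < t := lt_min one_pos (div_pos hε hden)
    have ht1 : t ≤ 1 := min_le_left _ _
    have h := key t ht0 ht1
    have htle : t ≤ ε / (‖d‖ ^ 2 / 2 + 1) := min_le_right _ _
    have hbound : t * (‖d‖ ^ 2 / 2) ≤ ε := by
      have h1 : t * (‖d‖ ^ 2 / 2) ≤ (ε / (‖d‖ ^ 2 / 2 + 1)) * (‖d‖ ^ 2 / 2) := by
        apply mul_le_mul_of_nonneg_right htle (by positivity)
      have h2 : (ε / (‖d‖ ^ 2 / 2 + 1)) * (‖d‖ ^ 2 / 2) ≤ ε := by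
        rw [div_mul_eq_mul_div, div_le_iff₀ hden]
        nlinarith [sq_nonneg ‖d‖]
      linarith
    linarith
  linarith

/-- Descent-type lemma from Lipschitz gradient (with constant `L` instead of `L/2`). -/
private lemma descent_lemma {g : EuclideanSpace ℝ (Fin n) → ℝ}
    {g' : EuclideanSpace ℝ (Fin n) → EuclideanSpace ℝ (Fin n)} {L : ℝ}
    (hg : ∀ x, HasGradientAt g (g' x) x)
    (hgL : ∀ x y, ‖g' x - g' y‖ ≤ L * ‖x - y‖) (hL0 : 0 ≤ L)
    (x y : EuclideanSpace ℝ (Fin n)) :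
    g y ≤ g x + ⟪g' x, y - x⟫ + L * ‖y - x‖ ^ 2 := by
  set s := segment ℝ x y with hs
  have hx : x ∈ s := left_mem_segment ℝ x y
  have hy : y ∈ s := right_mem_segment ℝ x y
  have hderiv : ∀ z ∈ s, HasFDerivWithinAt g
      ((InnerProductSpace.toDual ℝ (EuclideanSpace ℝ (Fin n))) (g' z)) s z :=
    fun z _ => ((hg z).hasFDerivAt).hasFDerivWithinAt
  have hbound : ∀ z ∈ s, ‖(InnerProductSpace.toDual ℝ (EuclideanSpace ℝ (Fin n))) (g' z)
      - (InnerProductSpace.toDual ℝ (EuclideanSpace ℝ (Fin n))) (g' x)‖ ≤ L * ‖y - x‖ := by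
    intro z hz
    rw [← map_sub, (InnerProductSpace.toDual ℝ _).norm_map]
    refine (hgL z x).trans ?_
    apply mul_le_mul_of_nonneg_left _ hL0
    obtain ⟨u, v, hu, hv, huv, hz⟩ := hz
    have hzx : z - x = v • (y - x) := by
      rw [← hz]
      have : u = 1 - v := by linarith
      rw [this]; module
    rw [hzx, norm_smul]
    have hv1 : v ≤ 1 := by linarith
    calc ‖v‖ * ‖y - x‖ = v * ‖y - x‖ := by rw [Real.norm_of_nonneg hv]
    _ ≤ 1 * ‖y - x‖ := mul_le_mul_of_nonneg_right hv1 (norm_nonneg _)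
    _ = ‖y - x‖ := one_mul _
  have hmvt := (convex_segment x y).norm_image_sub_le_of_norm_hasFDerivWithin_le'
    hderiv hbound hx hy
  rw [InnerProductSpace.toDual_apply_apply] at hmvt
  have habs := abs_le.mp (Real.norm_eq_abs _ ▸ hmvt)
  have hnn : L * ‖y - x‖ * ‖y - x‖ = L * ‖y - x‖ ^ 2 := by ring
  linarith [habs.2, hnn.ge, hnn.le, (by rw [hnn] at habs; exact habs.2 :
    g y - g x - ⟪g' x, y - x⟫ ≤ L * ‖y - x‖ ^ 2)]

end auxx

/-- Every cluster point of the proximal gradient sequence is a stationary point of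
`F = f + g`, i.e. `−∇g(x*) ∈ ∂f(x*)`. -/
theorem stmt_7 {n : ℕ}
    (f g : EuclideanSpace ℝ (Fin n) → ℝ)
    (g' : EuclideanSpace ℝ (Fin n) → EuclideanSpace ℝ (Fin n)) (L τ : ℝ)
    (hf_lsc : LowerSemicontinuous f) (hf_conv : ConvexOn ℝ Set.univ f)
    (hg : ∀ x, HasGradientAt g (g' x) x)
    (hgL : ∀ x y, ‖g' x - g' y‖ ≤ L * ‖x - y‖)
    (hbdd : ∃ m : ℝ, ∀ x, m ≤ f x + g x)
    (hL : 0 < L) (hτ : 0 < τ) (hτL : τ < 1 / L)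
    (P : EuclideanSpace ℝ (Fin n) → EuclideanSpace ℝ (Fin n))
    (hP : ∀ x z, (1 / 2) * ‖x - P x‖ ^ 2 + τ * f (P x) ≤ (1 / 2) * ‖x - z‖ ^ 2 + τ * f z)
    (x : ℕ → EuclideanSpace ℝ (Fin n))
    (hx : ∀ k, x (k + 1) = P (x k - τ • g' (x k)))
    (xstar : EuclideanSpace ℝ (Fin n))
    (hcluster : MapClusterPt xstar atTop x) :
    ∀ y, f xstar + ⟪-g' xstar, y - xstar⟫ ≤ f y := by
  intro y
  obtain ⟨m, hm⟩ := hbdd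
  -- key prox inequality along the iterates
  have key : ∀ k z, τ * f (x (k + 1)) +
      ⟪x k - τ • g' (x k) - x (k + 1), z - x (k + 1)⟫ ≤ τ * f z := by
    intro k z
    have := prox_key hf_conv hτ hP (x k - τ • g' (x k)) z
    rw [← hx k] at this
    exact this
  -- sufficient decrease
  have hc : 0 < 1 / τ - L := by
    have h1 : τ * L < 1 := (lt_div_iff₀ hL).mp hτL
    rw [sub_pos, lt_div_iff₀ hτ]
    linarith
  have dec : ∀ k, f (x (k + 1)) + g (x (k + 1)) + (1 / τ - L) * ‖x k - x (k + 1)‖ ^ 2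
      ≤ f (x k) + g (x k) := by
    intro k
    set d : EuclideanSpace ℝ (Fin n) := x k - x (k + 1) with hdk
    have h1 := key k (x k)
    have hxx : x k - x (k + 1) = d := rfl
    have hinn : ⟪x k - τ • g' (x k) - x (k + 1), x k - x (k + 1)⟫
        = ‖d‖ ^ 2 - τ * ⟪g' (x k), d⟫ := by
      have : x k - τ • g' (x k) - x (k + 1) = d - τ • g' (x k) := by rw [hdk]; abel
      rw [this, hxx, inner_sub_left, real_inner_smul_left, real_inner_self_eq_norm_sq]
    rw [hinn] at h1
    have h2 := descent_lemma hg hgL hL.le (x k) (x (k + 1))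
    have hyx : x (k + 1) - x k = -d := by rw [hdk]; abel
    rw [hyx] at h2
    rw [inner_neg_right, norm_neg] at h2
    -- h1 : τ * f (x (k+1)) + (‖d‖^2 - τ * ⟪g' (x k), d⟫) ≤ τ * f (x k)
    -- h2 : g (x (k+1)) ≤ g (x k) + -⟪g' (x k), d⟫ + L * ‖d‖^2
    have hτ' : 0 < τ := hτ
    have goal' : τ * (f (x (k + 1)) + g (x (k + 1)) + (1 / τ - L) * ‖d‖ ^ 2)
        ≤ τ * (f (x k) + g (x k)) := by
      have hτL1 : τ * (1 / τ) = 1 := mul_one_div_cancel hτ.ne'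
      nlinarith [h1, h2, hτ']
    exact le_of_mul_le_mul_left goal' hτ'
  -- F is antitone and bounded below, so ‖x k − x (k+1)‖ → 0
  set F : ℕ → ℝ := fun k => f (x k) + g (x k) with hF
  have hFanti : Antitone F := antitone_nat_of_succ_le fun k => by
    have h := dec k
    have hnn := mul_nonneg hc.le (sq_nonneg ‖x k - x (k + 1)‖)
    show f (x (k + 1)) + g (x (k + 1)) ≤ f (x k) + g (x k)
    linarith
  have hFbdd : BddBelow (Set.range F) := ⟨m, by rintro _ ⟨k, rfl⟩; exact hm (x k)⟩
  have hFlim : Tendsto F atTop (𝓝 (⨅ k, F k)) := tendsto_atTop_ciInf hFanti hFbdd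
  have hFdiff : Tendsto (fun k => F k - F (k + 1)) atTop (𝓝 0) := by
    have h2 : Tendsto (fun k => F (k + 1)) atTop (𝓝 (⨅ k, F k)) :=
      hFlim.comp (tendsto_add_atTop_nat 1)
    simpa using hFlim.sub h2
  have hd2 : Tendsto (fun k => ‖x k - x (k + 1)‖ ^ 2) atTop (𝓝 0) := by
    apply squeeze_zero (fun k => sq_nonneg _) (g := fun k => (F k - F (k + 1)) * (1 / (1 / τ - L)))
    · intro k
      have h1 : (1 / τ - L) * ‖x k - x (k + 1)‖ ^ 2 ≤ F k - F (k + 1) := by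
        show _ ≤ f (x k) + g (x k) - (f (x (k + 1)) + g (x (k + 1)))
        linarith [dec k]
      rw [mul_one_div, le_div_iff₀ hc]
      linarith [h1]
    · simpa using hFdiff.mul_const (1 / (1 / τ - L))
  have hdnorm : Tendsto (fun k => ‖x k - x (k + 1)‖) atTop (𝓝 0) := by
    have hsq := (Real.continuous_sqrt.tendsto 0).comp hd2
    simp only [Function.comp_def, Real.sqrt_zero] at hsq
    refine hsq.congr fun k => ?_
    rw [Real.sqrt_sq (norm_nonneg _)]
  have hd : Tendsto (fun k => x k - x (k + 1)) atTop (𝓝 0) := by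
    rw [tendsto_zero_iff_norm_tendsto_zero]
    exact hdnorm
  -- pass to a subsequence converging to xstar
  obtain ⟨φ, hφmono, hxφ⟩ := TopologicalSpace.FirstCountableTopology.tendsto_subseq hcluster
  have hφtop : Tendsto φ atTop atTop := hφmono.tendsto_atTop
  have hdφ : Tendsto (fun j => x (φ j) - x (φ j + 1)) atTop (𝓝 0) := hd.comp hφtop
  have hx1 : Tendsto (fun j => x (φ j + 1)) atTop (𝓝 xstar) := by
    have h0 := hxφ.sub hdφ
    rw [sub_zero] at h0
    refine h0.congr fun j => ?_
    simp [Function.comp_def, sub_sub_cancel]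
  have hxnφ : Tendsto (fun j => ‖x (φ j) - xstar‖) atTop (𝓝 0) := by
    rw [← tendsto_iff_norm_sub_tendsto_zero]
    exact hxφ
  have hgφ : Tendsto (fun j => g' (x (φ j))) atTop (𝓝 (g' xstar)) := by
    rw [tendsto_iff_norm_sub_tendsto_zero]
    apply squeeze_zero (fun j => norm_nonneg _) (fun j => hgL _ _)
    simpa using hxnφ.const_mul L
  -- the vector u j converges to −τ • g' xstar
  have hu : Tendsto (fun j => x (φ j) - τ • g' (x (φ j)) - x (φ j + 1)) atTop
      (𝓝 (-(τ • g' xstar))) := by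
    have h1 : Tendsto (fun j => x (φ j) - τ • g' (x (φ j))) atTop
        (𝓝 (xstar - τ • g' xstar)) := hxφ.sub (hgφ.const_smul τ)
    have h2 := h1.sub hx1
    have : xstar - τ • g' xstar - xstar = -(τ • g' xstar) := by abel
    rwa [this] at h2
  -- limit of the RHS of the key inequality
  have hRHS : Tendsto (fun j => τ * f y -
      ⟪x (φ j) - τ • g' (x (φ j)) - x (φ j + 1), y - x (φ j + 1)⟫) atTop
      (𝓝 (τ * f y - ⟪-(τ • g' xstar), y - xstar⟫)) :=
    tendsto_const_nhds.sub (hu.inner (tendsto_const_nhds.sub hx1))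
  have hlimval : τ * f y - ⟪-(τ • g' xstar), y - xstar⟫
      = τ * (f y + ⟪g' xstar, y - xstar⟫) := by
    rw [inner_neg_left, real_inner_smul_left]; ring
  rw [hlimval] at hRHS
  -- conclude using lower semicontinuity
  have hgoal : f xstar ≤ f y + ⟪g' xstar, y - xstar⟫ := by
    by_contra hcon
    push_neg at hcon
    obtain ⟨c, hc1, hc2⟩ := exists_between hcon
    have hev1 : ∀ᶠ j in atTop, c < f (x (φ j + 1)) :=
      hx1.eventually (hf_lsc xstar c hc2)
    have hτc : τ * (f y + ⟪g' xstar, y - xstar⟫) < τ * c :=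
      (mul_lt_mul_iff_right₀ hτ).mpr hc1
    have hev2 : ∀ᶠ j in atTop, τ * f y -
        ⟪x (φ j) - τ • g' (x (φ j)) - x (φ j + 1), y - x (φ j + 1)⟫ < τ * c :=
      hRHS.eventually_lt_const hτc
    obtain ⟨j, hj1, hj2⟩ := (hev1.and hev2).exists
    have hk := key (φ j) y
    have : τ * c < τ * f (x (φ j + 1)) := (mul_lt_mul_iff_right₀ hτ).mpr hj1
    linarith
  have : ⟪-g' xstar, y - xstar⟫ = -⟪g' xstar, y - xstar⟫ := inner_neg_left _ _
  rw [this]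
  linarith
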